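/- arXiv:2310.20562 — 5 statements merged into one kernel-verified Lean document; each statement's English description precedes it below -/
import Mathlib

section
/- The commutative Lie algebra C_sh(C) spanned over R by G_{j1} = Λ^j − Λ^{−j} (j ≥ 1), G_{02} = i·Id, G_{j2} = i(Λ^j + Λ^{−j}) (j ≥ 1) is a maximal commutative Lie subalgebra of the real Lie algebra SH(C) of skew-hermitian matrices in LT_Z(C): every A ∈ SH(C) commuting with all G_σ lies in C_sh(C). -/
noncomputable def matMul {R : Type*} [CommRing R] (A B : ℤ → ℤ → R) : ℤ → ℤ → R :=
  fun i j => ∑ᶠ k, A i k * B k j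

def LTZ {R : Type*} [CommRing R] (A : ℤ → ℤ → R) : Prop :=
  ∃ N : ℤ, ∀ i j : ℤ, N < j - i → A i j = 0

def shiftPow (m : ℤ) : ℤ → ℤ → ℂ :=
  fun i j => if j = i + m then 1 else 0

def idM : ℤ → ℤ → ℂ := fun i j => if j = i then 1 else 0

/-- `A* = -A` entrywise: the conjugate transpose is minus the matrix. -/
def SkewHermitian (A : ℤ → ℤ → ℂ) : Prop :=
  ∀ i j : ℤ, starRingEnd ℂ (A j i) = -A i j

/-- The basic directions `G_{j1} = Λ^j - Λ^{-j}` (j ≥ 1), `G_{02} = i·Id`,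
    `G_{j2} = i(Λ^j + Λ^{-j})` (j ≥ 1). -/
def Gset : Set (ℤ → ℤ → ℂ) :=
  {A | (∃ j : ℤ, 1 ≤ j ∧ A = shiftPow j - shiftPow (-j)) ∨
       A = Complex.I • idM ∨
       (∃ j : ℤ, 1 ≤ j ∧ A = Complex.I • (shiftPow j + shiftPow (-j)))}

/-! ### Auxiliary: Toeplitz matrices -/

def toep (a : ℤ → ℂ) : ℤ → ℤ → ℂ := fun i j => a (j - i)

lemma toep_conv (a b : ℤ → ℂ) (i j : ℤ) :
    matMul (toep a) (toep b) i j = ∑ᶠ m, a m * b (j - i - m) := by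
  show ∑ᶠ k, a (k - i) * b (j - k) = _
  rw [← finsum_comp_equiv (Equiv.addRight i) (f := fun k => a (k - i) * b (j - k))]
  apply finsum_congr; intro m
  have h1 : (Equiv.addRight i) m = m + i := rfl
  rw [h1]
  have h2 : m + i - i = m := by ring
  have h3 : j - (m + i) = j - i - m := by ring
  rw [h2, h3]

lemma toep_comm (a b : ℤ → ℂ) : matMul (toep a) (toep b) = matMul (toep b) (toep a) := by
  funext i j
  rw [toep_conv, toep_conv]
  rw [← finsum_comp_equiv (Equiv.subLeft (j - i)) (f := fun m => b m * a (j - i - m))]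
  apply finsum_congr; intro m
  have h1 : (Equiv.subLeft (j - i)) m = j - i - m := rfl
  rw [h1]
  have h2 : j - i - (j - i - m) = m := by ring
  rw [h2, mul_comm]

/-- The `ℝ`-submodule of Toeplitz matrices. -/
noncomputable def Tsub : Submodule ℝ (ℤ → ℤ → ℂ) where
  carrier := {A | ∃ a : ℤ → ℂ, A = toep a}
  zero_mem' := ⟨0, rfl⟩
  add_mem' := by
    rintro A B ⟨a, rfl⟩ ⟨b, rfl⟩
    exact ⟨a + b, rfl⟩
  smul_mem' := by
    rintro r A ⟨a, rfl⟩
    exact ⟨r • a, rfl⟩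

lemma Gset_sub_Tsub : Gset ⊆ (Tsub : Set (ℤ → ℤ → ℂ)) := by
  rintro A (⟨j, hj, rfl⟩ | rfl | ⟨j, hj, rfl⟩)
  · refine ⟨fun d => (if d = j then 1 else 0) - (if d = -j then 1 else 0), ?_⟩
    funext i k
    simp only [Pi.sub_apply, shiftPow, toep]
    have h1 : (k = i + j) ↔ (k - i = j) := by omega
    have h2 : (k = i + -j) ↔ (k - i = -j) := by omega
    simp only [h1, h2]
  · refine ⟨fun d => if d = 0 then Complex.I else 0, ?_⟩
    funext i k
    simp only [Pi.smul_apply, idM, toep, smul_eq_mul]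
    have h1 : (k = i) ↔ (k - i = 0) := by omega
    simp only [h1]
    split_ifs <;> ring
  · refine ⟨fun d => Complex.I * ((if d = j then 1 else 0) + (if d = -j then 1 else 0)), ?_⟩
    funext i k
    simp only [Pi.smul_apply, Pi.add_apply, shiftPow, toep, smul_eq_mul]
    have h1 : (k = i + j) ↔ (k - i = j) := by omega
    have h2 : (k = i + -j) ↔ (k - i = -j) := by omega
    simp only [h1, h2]

/-! ### Auxiliary: computing products against shift generators -/

lemma finsum_pair (g : ℤ → ℂ) (p q : ℤ) (hpq : p ≠ q)
    (hg : ∀ k, k ≠ p → k ≠ q → g k = 0) : ∑ᶠ k, g k = g p + g q := by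
  have hs : Function.support g ⊆ (({p, q} : Finset ℤ) : Set ℤ) := by
    intro k hk
    simp only [Function.mem_support] at hk
    simp only [Finset.coe_insert, Finset.coe_singleton, Set.mem_insert_iff,
      Set.mem_singleton_iff]
    by_contra h
    push_neg at h
    exact hk (hg k h.1 h.2)
  rw [finsum_eq_sum_of_support_subset g hs, Finset.sum_pair hpq]

lemma mm_right (A : ℤ → ℤ → ℂ) (i j : ℤ) :
    matMul A (shiftPow 1 - shiftPow (-1)) i j = A i (j - 1) - A i (j + 1) := by
  show ∑ᶠ k, A i k * ((if j = k + 1 then (1:ℂ) else 0) - (if j = k + -1 then 1 else 0)) = _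
  rw [finsum_pair _ (j - 1) (j + 1) (by omega)
    (fun k hk1 hk2 => by
      have h1 : ¬ j = k + 1 := by omega
      have h2 : ¬ j = k + -1 := by omega
      rw [if_neg h1, if_neg h2]; ring)]
  rw [if_pos (show j = j - 1 + 1 by omega), if_neg (show ¬ j = j - 1 + -1 by omega),
    if_neg (show ¬ j = j + 1 + 1 by omega), if_pos (show j = j + 1 + -1 by omega)]
  ring

lemma mm_left (A : ℤ → ℤ → ℂ) (i j : ℤ) :
    matMul (shiftPow 1 - shiftPow (-1)) A i j = A (i + 1) j - A (i - 1) j := by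
  show ∑ᶠ k, ((if k = i + 1 then (1:ℂ) else 0) - (if k = i + -1 then 1 else 0)) * A k j = _
  rw [finsum_pair _ (i + 1) (i - 1) (by omega)
    (fun k hk1 hk2 => by
      have h1 : ¬ k = i + 1 := hk1
      have h2 : ¬ k = i + -1 := by omega
      rw [if_neg h1, if_neg h2]; ring)]
  rw [if_pos (show i + 1 = i + 1 from rfl), if_neg (show ¬ i + 1 = i + -1 by omega),
    if_neg (show ¬ i - 1 = i + 1 by omega), if_pos (show i - 1 = i + -1 by omega)]
  ring

lemma mm_right_I (A : ℤ → ℤ → ℂ) (i j : ℤ) :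
    matMul A (Complex.I • (shiftPow 1 + shiftPow (-1))) i j
      = Complex.I * A i (j - 1) + Complex.I * A i (j + 1) := by
  show ∑ᶠ k, A i k * (Complex.I * ((if j = k + 1 then (1:ℂ) else 0)
      + (if j = k + -1 then 1 else 0))) = _
  rw [finsum_pair _ (j - 1) (j + 1) (by omega)
    (fun k hk1 hk2 => by
      have h1 : ¬ j = k + 1 := by omega
      have h2 : ¬ j = k + -1 := by omega
      rw [if_neg h1, if_neg h2]; ring)]
  rw [if_pos (show j = j - 1 + 1 by omega), if_neg (show ¬ j = j - 1 + -1 by omega),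
    if_neg (show ¬ j = j + 1 + 1 by omega), if_pos (show j = j + 1 + -1 by omega)]
  ring

lemma mm_left_I (A : ℤ → ℤ → ℂ) (i j : ℤ) :
    matMul (Complex.I • (shiftPow 1 + shiftPow (-1))) A i j
      = Complex.I * A (i + 1) j + Complex.I * A (i - 1) j := by
  show ∑ᶠ k, (Complex.I * ((if k = i + 1 then (1:ℂ) else 0)
      + (if k = i + -1 then 1 else 0))) * A k j = _
  rw [finsum_pair _ (i + 1) (i - 1) (by omega)
    (fun k hk1 hk2 => by
      have h1 : ¬ k = i + 1 := hk1
      have h2 : ¬ k = i + -1 := by omega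
      rw [if_neg h1, if_neg h2]; ring)]
  rw [if_pos (show i + 1 = i + 1 from rfl), if_neg (show ¬ i + 1 = i + -1 by omega),
    if_neg (show ¬ i - 1 = i + 1 by omega), if_pos (show i - 1 = i + -1 by omega)]
  ring

/-! ### The theorem -/

/-- `C_sh(ℂ)` is a *maximal* commutative Lie subalgebra of the skew-hermitian
matrices in `LT_ℤ(ℂ)`: it is commutative, and every skew-hermitian `A ∈ LT_ℤ(ℂ)`
commuting with all basic directions `G_σ` lies in the real span of the `G_σ`. -/
theorem statement4 :
    (∀ A ∈ Submodule.span ℝ Gset, ∀ B ∈ Submodule.span ℝ Gset,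
        matMul A B - matMul B A = 0) ∧
    (∀ A : ℤ → ℤ → ℂ, LTZ A → SkewHermitian A →
        (∀ G ∈ Gset, matMul A G = matMul G A) →
        A ∈ Submodule.span ℝ Gset) := by
  have hspan : Submodule.span ℝ Gset ≤ Tsub := Submodule.span_le.mpr Gset_sub_Tsub
  constructor
  · intro A hA B hB
    obtain ⟨a, rfl⟩ := hspan hA
    obtain ⟨b, rfl⟩ := hspan hB
    rw [toep_comm, sub_self]
  · rintro A ⟨N, hN⟩ hskew hcomm
    have hG1 : (shiftPow 1 - shiftPow (-1)) ∈ Gset := Or.inl ⟨1, le_refl _, rfl⟩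
    have hG2 : (Complex.I • (shiftPow 1 + shiftPow (-1))) ∈ Gset :=
      Or.inr (Or.inr ⟨1, le_refl _, rfl⟩)
    have E1 : ∀ i j : ℤ, A i (j - 1) - A i (j + 1) = A (i + 1) j - A (i - 1) j := by
      intro i j
      have := congrFun (congrFun (hcomm _ hG1) i) j
      rwa [mm_right, mm_left] at this
    have E2 : ∀ i j : ℤ, A i (j - 1) + A i (j + 1) = A (i + 1) j + A (i - 1) j := by
      intro i j
      have h := congrFun (congrFun (hcomm _ hG2) i) j
      rw [mm_right_I, mm_left_I] at h
      have h' : Complex.I * (A i (j - 1) + A i (j + 1))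
          = Complex.I * (A (i + 1) j + A (i - 1) j) := by linear_combination h
      exact mul_left_cancel₀ Complex.I_ne_zero h'
    have step : ∀ i j : ℤ, A i j = A (i + 1) (j + 1) := by
      intro i j
      have h1 := E1 i (j + 1)
      have h2 := E2 i (j + 1)
      have h3 : (2 : ℂ) * A i (j + 1 - 1) = 2 * A (i + 1) (j + 1) := by
        linear_combination h1 + h2
      have h4 : A i (j + 1 - 1) = A (i + 1) (j + 1) :=
        mul_left_cancel₀ two_ne_zero h3
      rwa [show j + 1 - 1 = j from by ring] at h4
    have toeplitz : ∀ i j : ℤ, A i j = A 0 (j - i) := by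
      have key : ∀ n : ℤ, ∀ i j : ℤ, A i j = A (i + n) (j + n) := by
        intro n
        induction n using Int.induction_on with
        | zero => intro i j; simp
        | succ n ih =>
          intro i j
          rw [ih i j, step (i + n) (j + n)]
          congr 1 <;> ring
        | pred n ih =>
          intro i j
          have h := step (i + (-n - 1)) (j + (-n - 1))
          rw [show i + (-n - 1) + 1 = i + -n from by ring,
            show j + (-n - 1) + 1 = j + -n from by ring] at h
          rw [← ih i j] at h
          exact h.symm
      intro i j
      have := key (-i) i j
      simpa [sub_eq_add_neg] using this
    set a : ℤ → ℂ := fun d => A 0 d with ha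
    have hAa : ∀ i j : ℤ, A i j = a (j - i) := toeplitz
    have hskew' : ∀ d : ℤ, (starRingEnd ℂ) (a (-d)) = -a d := by
      intro d
      have h := hskew 0 d
      rwa [hAa d 0, hAa 0 d, show (0 : ℤ) - d = -d from by ring,
        show d - (0 : ℤ) = d from by ring] at h
    have hNa : ∀ d : ℤ, N < d → a d = 0 := fun d hd => hN 0 d (by omega)
    set M : ℤ := max N 1 with hM
    have hre0 : (a 0).re = 0 := by
      have h := congrArg Complex.re (hskew' 0)
      simp only [neg_zero, Complex.conj_re, Complex.neg_re] at h
      linarith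
    have hrep : A = (a 0).im • (Complex.I • idM)
        + ∑ m ∈ Finset.Icc (1 : ℤ) M,
            ((a m).re • (shiftPow m - shiftPow (-m))
              + (a m).im • (Complex.I • (shiftPow m + shiftPow (-m)))) := by
      funext i j
      rw [show A i j = a (j - i) from hAa i j]
      simp only [Pi.add_apply, Finset.sum_apply, Pi.smul_apply, Pi.sub_apply,
        smul_eq_mul, Complex.real_smul, idM, shiftPow]
      rcases lt_trichotomy (j - i) 0 with hd | hd | hd
      · -- negative diagonal: only m = i - j survives
        rw [Finset.sum_eq_single (i - j)]
        · have hx : (starRingEnd ℂ) (a (i - j)) = ↑(a (i - j)).re - ↑(a (i - j)).im * Complex.I :=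
            Complex.ext (by simp) (by simp)
          have hs := hskew' (j - i)
          rw [show -(j - i) = i - j from by ring] at hs
          simp only [if_neg (show ¬ j = i by omega),
            if_neg (show ¬ j = i + (i - j) by omega),
            if_pos (show j = i + -(i - j) by omega)]
          linear_combination hs - hx
        · intro m hm hne
          simp only [Finset.mem_Icc] at hm
          rw [if_neg (show ¬ j = i + m by omega), if_neg (show ¬ j = i + -m by omega)]
          ring
        · intro hnm
          simp only [Finset.mem_Icc, not_and, not_le] at hnm
          have hij : M < i - j := hnm (by omega)
          have h0 : a (i - j) = 0 := hNa _ (by omega)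
          rw [h0]
          simp
      · -- main diagonal
        rw [Finset.sum_eq_zero, add_zero]
        · rw [if_pos (show j = i by omega)]
          have := Complex.re_add_im (a (j - i))
          rw [show j - i = 0 from hd] at *
          rw [hre0, Complex.ofReal_zero, zero_add] at this
          linear_combination -this
        · intro m hm
          simp only [Finset.mem_Icc] at hm
          rw [if_neg (show ¬ j = i + m by omega), if_neg (show ¬ j = i + -m by omega)]
          ring
      · -- positive diagonal: only m = j - i survives
        rw [Finset.sum_eq_single (j - i)]
        · rw [if_neg (show ¬ j = i by omega),
            if_pos (show j = i + (j - i) by omega),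
            if_neg (show ¬ j = i + -(j - i) by omega)]
          have := Complex.re_add_im (a (j - i))
          linear_combination -this
        · intro m hm hne
          simp only [Finset.mem_Icc] at hm
          rw [if_neg (show ¬ j = i + m by omega), if_neg (show ¬ j = i + -m by omega)]
          ring
        · intro hnm
          simp only [Finset.mem_Icc, not_and, not_le] at hnm
          have hij : M < j - i := hnm (by omega)
          have h0 : a (j - i) = 0 := hNa _ (by omega)
          rw [h0]
          simp
    rw [hrep]
    apply Submodule.add_mem
    · exact Submodule.smul_mem _ _ (Submodule.subset_span (Or.inr (Or.inl rfl)))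
    · apply Submodule.sum_mem
      intro m hm
      simp only [Finset.mem_Icc] at hm
      apply Submodule.add_mem
      · exact Submodule.smul_mem _ _ (Submodule.subset_span (Or.inl ⟨m, hm.1, rfl⟩))
      · exact Submodule.smul_mem _ _ (Submodule.subset_span (Or.inr (Or.inr ⟨m, hm.1, rfl⟩)))
end

section
/- LT_Z(R_as) decomposes as a direct sum of real vector spaces LT_Z(R_as) = P_{≤0} ⊕ AS(R_as), where P_{≤0} is the space of lower triangular matrices (all diagonals of index > 0 vanish) and AS(R_as) the antisymmetric matrices; explicitly, for P = Σ_j d_j Λ^j, π_{≤0}(P) = Σ_{j≤0} d_j Λ^j + Σ_{j<0} Λ^j d_{−j} and π_{as}(P) = Σ_{j>0} d_j Λ^j − Σ_{j>0} Λ^{−j} d_j. Both summands are Lie subalgebras. -/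
/-- Lower triangular: all diagonals of index `> 0` vanish. -/
def LowerT {R : Type*} [CommRing R] (P : ℤ → ℤ → R) : Prop :=
  ∀ i j : ℤ, i < j → P i j = 0

/-- `A^T = -A`. -/
def AntiSym {R : Type*} [CommRing R] (A : ℤ → ℤ → R) : Prop :=
  ∀ i j : ℤ, A j i = -A i j

/-- `π_{≤0}(P) = Σ_{j≤0} d_j Λ^j + Σ_{j<0} Λ^j d_{-j}`, entrywise. -/
def piLe {R : Type*} [CommRing R] (P : ℤ → ℤ → R) : ℤ → ℤ → R :=
  fun i j => if i < j then 0 else if i = j then P i i else P i j + P j i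

/-- `π_{as}(P) = Σ_{j>0} d_j Λ^j - Σ_{j>0} Λ^{-j} d_j`, entrywise. -/
def piAs {R : Type*} [CommRing R] (P : ℤ → ℤ → R) : ℤ → ℤ → R :=
  fun i j => if i < j then P i j else if i = j then 0 else -P j i

private lemma eq_zero_of_eq_neg_self {R : Type*} [AddCommGroup R] [Module ℝ R]
    {x : R} (h : x = -x) : x = 0 := by
  have h2 : (2 : ℝ) • x = 0 := by
    rw [two_smul]
    nth_rewrite 2 [h]
    exact add_neg_cancel x
  have := congrArg (fun y : R => (2 : ℝ)⁻¹ • y) h2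
  simpa [smul_smul] using this

/-- `LT_ℤ(R_as) = P_{≤0} ⊕ AS(R_as)` with the stated projections, and both
summands are Lie subalgebras. -/
theorem statement7 {R : Type*} [CommRing R] [Algebra ℝ R] :
    (∀ P : ℤ → ℤ → R,
      LowerT (piLe P) ∧ AntiSym (piAs P) ∧ P = piLe P + piAs P ∧
      (LTZ P → LTZ (piLe P) ∧ LTZ (piAs P)) ∧
      (∀ Q S : ℤ → ℤ → R, LowerT Q → AntiSym S → P = Q + S →
        Q = piLe P ∧ S = piAs P)) ∧
    (∀ A B : ℤ → ℤ → R, LowerT A → LowerT B →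
        LowerT (matMul A B - matMul B A)) ∧
    (∀ A B : ℤ → ℤ → R, LTZ A → LTZ B → AntiSym A → AntiSym B →
        AntiSym (matMul A B - matMul B A)) := by
  refine ⟨?_, ?_, ?_⟩
  · intro P
    refine ⟨?_, ?_, ?_, ?_, ?_⟩
    · intro i j hij
      simp [piLe, hij]
    · intro i j
      rcases lt_trichotomy i j with h | h | h
      · simp [piAs, h, not_lt.mpr h.le, h.ne', h.ne]
      · simp [piAs, h]
      · simp [piAs, h, not_lt.mpr h.le, h.ne', h.ne]
    · funext i j
      rcases lt_trichotomy i j with h | h | h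
      · simp [piLe, piAs, h]
      · simp [piLe, piAs, h]
      · simp only [Pi.add_apply, piLe, piAs, if_neg (not_lt.mpr h.le), if_neg h.ne']
        ring
    · rintro ⟨N, hN⟩
      constructor
      · exact ⟨0, fun i j h => by
          have : i < j := by omega
          simp [piLe, this]⟩
      · refine ⟨N ⊔ 0, fun i j h => ?_⟩
        have hij : i < j := by
          have := le_sup_right (a := N) (b := (0 : ℤ)); omega
        simp [piAs, hij, hN i j (by have := le_sup_left (a := N) (b := (0 : ℤ)); omega)]
    · intro Q S hQ hS hPQS
      have hP : ∀ i j, P i j = Q i j + S i j := fun i j => by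
        rw [hPQS]; rfl
      have hQeq : Q = piLe P := by
        funext i j
        rcases lt_trichotomy i j with h | h | h
        · simp [piLe, h, hQ i j h]
        · subst h
          have hS0 : S i i = 0 := eq_zero_of_eq_neg_self ((hS i i).symm ▸ (hS i i))
          simp [piLe, hP i i, hS0]
        · have h1 : P i j = Q i j + S i j := hP i j
          have h2 : P j i = S j i := by rw [hP j i, hQ j i h]; ring
          have h3 : S j i = -S i j := hS i j
          simp only [piLe, if_neg (not_lt.mpr h.le), if_neg h.ne']
          rw [h1, h2, h3]; ring
      refine ⟨hQeq, ?_⟩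
      funext i j
      have := hP i j
      rw [congrFun (congrFun hQeq i) j] at this
      rcases lt_trichotomy i j with h | h | h
      · simp only [piLe, if_pos h] at this
        simp only [piAs, if_pos h]
        linear_combination -this
      · subst h
        simp [piLe] at this
        simp [piAs, this]
      · simp only [piLe, if_neg (not_lt.mpr h.le), if_neg h.ne'] at this
        simp only [piAs, if_neg (not_lt.mpr h.le), if_neg h.ne']
        have h2 : P j i = S j i := by rw [hP j i, hQ j i h]; ring
        rw [h2, hS i j]; ring
  · intro A B hA hB i j hij
    have key : ∀ (X Y : ℤ → ℤ → R), LowerT X → LowerT Y → matMul X Y i j = 0 := by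
      intro X Y hX hY
      apply finsum_eq_zero_of_forall_eq_zero
      intro k
      rcases lt_or_ge i k with h | h
      · rw [hX i k h, zero_mul]
      · rw [hY k j (lt_of_le_of_lt h hij), mul_zero]
    simp [Pi.sub_apply, key A B hA hB, key B A hB hA]
  · intro A B _ _ hA hB i j
    have key : ∀ (X Y : ℤ → ℤ → R), AntiSym X → AntiSym Y →
        matMul X Y j i = matMul Y X i j := by
      intro X Y hX hY
      apply finsum_congr
      intro k
      rw [hX k j, hY i k]; ring
    simp only [Pi.sub_apply, key A B hA hB, key B A hB hA]
    ring
end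

section
/- Let {G_σ} be a commuting family of matrices and {𝒢_σ} a family of simultaneous conjugates 𝒢_σ = g G_σ g^{-1} (so all 𝒢_σ mutually commute). If the 𝒢_σ satisfy the Lax equations ∂_{σ1}(𝒢_{σ2}) = [π_{sh}(𝒢_{σ1}), 𝒢_{σ2}] for all σ1, σ2, then the projections B_σ := π_{sh}(𝒢_σ) satisfy the zero curvature relations ∂_{σ1}(B_{σ2}) − ∂_{σ2}(B_{σ1}) − [B_{σ1}, B_{σ2}] = 0. -/
/-- Zero curvature relations for the projections `B_σ = π_{sh}(𝒢_σ)` of a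
solution of the Lax equations. `L` is an associative algebra decomposed as a
direct sum of two Lie subalgebras via the complementary projections
`πm = π_-` and `πsh`, with commuting derivations `D σ` acting entrywise
(hence commuting with the projections). -/
theorem statement8 {L : Type*} [Ring L] {Sig : Type*}
    (πm πsh : L →+ L)
    (hsum : ∀ x, πm x + πsh x = x)
    (hid₁ : ∀ x, πm (πm x) = πm x)
    (hid₂ : ∀ x, πsh (πsh x) = πsh x)
    (hmix : ∀ x, πm (πsh x) = 0)
    (hsub₁ : ∀ x y, πm (πm x * πm y - πm y * πm x) = πm x * πm y - πm y * πm x)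
    (hsub₂ : ∀ x y, πsh (πsh x * πsh y - πsh y * πsh x) = πsh x * πsh y - πsh y * πsh x)
    (D : Sig → L → L)
    (hDadd : ∀ σ x y, D σ (x + y) = D σ x + D σ y)
    (hDmul : ∀ σ x y, D σ (x * y) = D σ x * y + x * D σ y)
    (hDcomm : ∀ σ τ x, D σ (D τ x) = D τ (D σ x))
    (hDproj : ∀ σ x, D σ (πsh x) = πsh (D σ x))
    (g : Lˣ) (G : Sig → L)
    (hGcomm : ∀ σ τ, G σ * G τ = G τ * G σ)
    (𝒢 : Sig → L) (hconj : ∀ σ, 𝒢 σ = ↑g * G σ * ↑g⁻¹)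
    (hlax : ∀ σ₁ σ₂, D σ₁ (𝒢 σ₂) = πsh (𝒢 σ₁) * 𝒢 σ₂ - 𝒢 σ₂ * πsh (𝒢 σ₁)) :
    ∀ σ₁ σ₂, D σ₁ (πsh (𝒢 σ₂)) - D σ₂ (πsh (𝒢 σ₁))
      - (πsh (𝒢 σ₁) * πsh (𝒢 σ₂) - πsh (𝒢 σ₂) * πsh (𝒢 σ₁)) = 0 := by
  intro σ₁ σ₂
  set A := 𝒢 σ₁ with hAdef
  set B := 𝒢 σ₂ with hBdef
  have hc : A * B = B * A := by
    rw [hAdef, hBdef, hconj σ₁, hconj σ₂]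
    have h1 : (↑g⁻¹ : L) * ↑g = 1 := g.inv_mul
    calc ↑g * G σ₁ * ↑g⁻¹ * (↑g * G σ₂ * ↑g⁻¹)
        = ↑g * G σ₁ * (↑g⁻¹ * ↑g) * G σ₂ * ↑g⁻¹ := by noncomm_ring
      _ = ↑g * (G σ₁ * G σ₂) * ↑g⁻¹ := by rw [h1]; noncomm_ring
      _ = ↑g * (G σ₂ * G σ₁) * ↑g⁻¹ := by rw [hGcomm]
      _ = ↑g * G σ₂ * (↑g⁻¹ * ↑g) * G σ₁ * ↑g⁻¹ := by rw [h1]; noncomm_ring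
      _ = ↑g * G σ₂ * ↑g⁻¹ * (↑g * G σ₁ * ↑g⁻¹) := by noncomm_ring
  set a := πm A
  set b := πsh A with hbdef
  set c := πm B
  set d := πsh B with hddef
  have hA : a + b = A := hsum A
  have hB : c + d = B := hsum B
  have hc' : a * c + a * d + b * c + b * d = c * a + c * b + d * a + d * b := by
    calc a * c + a * d + b * c + b * d = (a + b) * (c + d) := by noncomm_ring
      _ = A * B := by rw [hA, hB]
      _ = B * A := hc
      _ = (c + d) * (a + b) := by rw [hA, hB]
      _ = c * a + c * b + d * a + d * b := by noncomm_ring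
  have key : (b * B - B * b) - (d * A - A * d)
      = (b * d - d * b) - (a * c - c * a) := by
    rw [← hA, ← hB]
    have expand : ((b * (c + d) - (c + d) * b) - (d * (a + b) - (a + b) * d))
        - ((b * d - d * b) - (a * c - c * a))
        = (a * c + a * d + b * c + b * d) - (c * a + c * b + d * a + d * b) := by
      noncomm_ring
    rw [hc', sub_self] at expand
    exact sub_eq_zero.mp expand
  have hsh_ac : πsh (a * c - c * a) = 0 := by
    have h1 := hsum (a * c - c * a)
    have h2 : πm (a * c - c * a) = a * c - c * a := hsub₁ A B
    rw [h2] at h1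
    exact add_eq_left.mp h1
  have hsh_bd : πsh (b * d - d * b) = b * d - d * b := hsub₂ A B
  have e1 : D σ₁ d = πsh (b * B - B * b) := by
    rw [hddef, hDproj, hBdef]
    rw [hlax σ₁ σ₂]
  have e2 : D σ₂ b = πsh (d * A - A * d) := by
    rw [hbdef, hDproj, hAdef]
    rw [hlax σ₂ σ₁]
  rw [e1, e2, ← map_sub, key, map_sub, hsh_ac, hsh_bd]
  abel
end

section
/- Under the hypotheses of the zero curvature proposition, the components A_σ := π_{sh}(𝒢_σ) − 𝒢_σ = −π_−(𝒢_σ) of a solution {𝒢_σ} of the Lax equations also satisfy zero curvature relations: ∂_{σ1}(A_{σ2}) − ∂_{σ2}(A_{σ1}) − [A_{σ1}, A_{σ2}] = 0. -/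
/-- Zero curvature relations for the projections `B_σ = π_{sh}(𝒢_σ)` of a
solution of the Lax equations. `L` is an associative algebra decomposed as a
direct sum of two Lie subalgebras via the complementary projections
`πm = π_-` and `πsh`, with commuting derivations `D σ` acting entrywise
(hence commuting with the projections). -/
theorem statement9 {L : Type*} [Ring L] {Sig : Type*}
    (πm πsh : L →+ L)
    (hsum : ∀ x, πm x + πsh x = x)
    (hid₁ : ∀ x, πm (πm x) = πm x)
    (hid₂ : ∀ x, πsh (πsh x) = πsh x)
    (hmix : ∀ x, πm (πsh x) = 0)
    (hsub₁ : ∀ x y, πm (πm x * πm y - πm y * πm x) = πm x * πm y - πm y * πm x)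
    (hsub₂ : ∀ x y, πsh (πsh x * πsh y - πsh y * πsh x) = πsh x * πsh y - πsh y * πsh x)
    (D : Sig → L → L)
    (hDadd : ∀ σ x y, D σ (x + y) = D σ x + D σ y)
    (hDmul : ∀ σ x y, D σ (x * y) = D σ x * y + x * D σ y)
    (hDcomm : ∀ σ τ x, D σ (D τ x) = D τ (D σ x))
    (hDproj : ∀ σ x, D σ (πsh x) = πsh (D σ x))
    (g : Lˣ) (G : Sig → L)
    (hGcomm : ∀ σ τ, G σ * G τ = G τ * G σ)
    (𝒢 : Sig → L) (hconj : ∀ σ, 𝒢 σ = ↑g * G σ * ↑g⁻¹)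
    (hlax : ∀ σ₁ σ₂, D σ₁ (𝒢 σ₂) = πsh (𝒢 σ₁) * 𝒢 σ₂ - 𝒢 σ₂ * πsh (𝒢 σ₁)) :
    ∀ σ₁ σ₂, D σ₁ (πsh (𝒢 σ₂) - 𝒢 σ₂) - D σ₂ (πsh (𝒢 σ₁) - 𝒢 σ₁)
      - ((πsh (𝒢 σ₁) - 𝒢 σ₁) * (πsh (𝒢 σ₂) - 𝒢 σ₂)
         - (πsh (𝒢 σ₂) - 𝒢 σ₂) * (πsh (𝒢 σ₁) - 𝒢 σ₁)) = 0 := by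
  intro σ₁ σ₂
  have hDsub : ∀ σ x y, D σ (x - y) = D σ x - D σ y := by
    intro σ x y
    have h := hDadd σ (x - y) y
    rw [sub_add_cancel] at h
    exact eq_sub_of_add_eq h.symm
  have hπ0 : ∀ y : L, πm y = y → πsh y = 0 := by
    intro y h
    have hs := hsum y
    rw [h] at hs
    exact add_eq_left.mp hs
  have key : ∀ a b : L, (↑g * a * ↑g⁻¹) * (↑g * b * ↑g⁻¹) = ↑g * (a * b) * ↑g⁻¹ := by
    intro a b
    simp only [mul_assoc, Units.inv_mul_cancel_left]
  have h𝒢 : 𝒢 σ₁ * 𝒢 σ₂ = 𝒢 σ₂ * 𝒢 σ₁ := by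
    rw [hconj σ₁, hconj σ₂, key, key, hGcomm]
  have harg : ∀ x y m1 b1 m2 b2 : L, x = m1 + b1 → y = m2 + b2 → x * y = y * x →
      b1 * y - y * b1 - (b2 * x - x * b2)
        = (b1 * b2 - b2 * b1) - (m1 * m2 - m2 * m1) := by
    rintro x y m1 b1 m2 b2 rfl rfl h
    have h0 : (m1 + b1) * (m2 + b2) - (m2 + b2) * (m1 + b1) = 0 := sub_eq_zero.mpr h
    calc b1 * (m2 + b2) - (m2 + b2) * b1 - (b2 * (m1 + b1) - (m1 + b1) * b2)
        = ((b1 * b2 - b2 * b1) - (m1 * m2 - m2 * m1))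
            + ((m1 + b1) * (m2 + b2) - (m2 + b2) * (m1 + b1)) := by noncomm_ring
      _ = (b1 * b2 - b2 * b1) - (m1 * m2 - m2 * m1) := by rw [h0, add_zero]
  have eπ : πsh (πsh (𝒢 σ₁) * 𝒢 σ₂ - 𝒢 σ₂ * πsh (𝒢 σ₁))
      - πsh (πsh (𝒢 σ₂) * 𝒢 σ₁ - 𝒢 σ₁ * πsh (𝒢 σ₂))
      = πsh (𝒢 σ₁) * πsh (𝒢 σ₂) - πsh (𝒢 σ₂) * πsh (𝒢 σ₁) := by
    rw [← map_sub,
      harg (𝒢 σ₁) (𝒢 σ₂) (πm (𝒢 σ₁)) (πsh (𝒢 σ₁)) (πm (𝒢 σ₂)) (πsh (𝒢 σ₂))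
        (hsum (𝒢 σ₁)).symm (hsum (𝒢 σ₂)).symm h𝒢,
      map_sub, hsub₂, hπ0 _ (hsub₁ (𝒢 σ₁) (𝒢 σ₂)), sub_zero]
  have final : ∀ p1 p2 b1 b2 G1 G2 : L,
      p1 - p2 = b1 * b2 - b2 * b1 → G1 * G2 = G2 * G1 →
      p1 - (b1 * G2 - G2 * b1) - (p2 - (b2 * G1 - G1 * b2))
        - ((b1 - G1) * (b2 - G2) - (b2 - G2) * (b1 - G1)) = 0 := by
    intro p1 p2 b1 b2 G1 G2 hp hG
    have h0 : G1 * G2 - G2 * G1 = 0 := sub_eq_zero.mpr hG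
    calc p1 - (b1 * G2 - G2 * b1) - (p2 - (b2 * G1 - G1 * b2))
          - ((b1 - G1) * (b2 - G2) - (b2 - G2) * (b1 - G1))
        = ((p1 - p2) - (b1 * b2 - b2 * b1)) - (G1 * G2 - G2 * G1) := by noncomm_ring
      _ = 0 := by rw [hp, sub_self, zero_sub, h0, neg_zero]
  rw [hDsub, hDsub, hDproj, hDproj, hlax σ₁ σ₂, hlax σ₂ σ₁]
  exact final _ _ _ _ _ _ eπ h𝒢
end

section
/- (Sato–Wilson implies Lax) Let K be invertible in L, let 𝒢_σ := K G_σ K^{-1} where the G_σ are constant (∂_τ(G_σ) = 0) and mutually commuting, and set A_σ := π_{sh}(𝒢_σ) − 𝒢_σ. If ∂_σ(K) = A_σ K for all σ, then ∂_{σ1}(𝒢_{σ2}) = [π_{sh}(𝒢_{σ1}), 𝒢_{σ2}] for all σ1, σ2. -/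
/-- Sato–Wilson implies Lax: if `K` is a unit, `𝒢_σ = K G_σ K⁻¹` with the `G_σ`
constant and mutually commuting, `A_σ = π_{sh}(𝒢_σ) - 𝒢_σ`, and
`∂_σ(K) = A_σ K`, then the `𝒢_σ` satisfy the Lax equations. -/
theorem statement10 {L : Type*} [Ring L] {Sig : Type*}
    (πsh : L →+ L)
    (D : Sig → L → L)
    (hDadd : ∀ σ x y, D σ (x + y) = D σ x + D σ y)
    (hDmul : ∀ σ x y, D σ (x * y) = D σ x * y + x * D σ y)
    (G : Sig → L)
    (hGconst : ∀ σ τ, D τ (G σ) = 0)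
    (hGcomm : ∀ σ τ, G σ * G τ = G τ * G σ)
    (K : Lˣ)
    (𝒢 : Sig → L) (hconj : ∀ σ, 𝒢 σ = ↑K * G σ * ↑K⁻¹)
    (A : Sig → L) (hA : ∀ σ, A σ = πsh (𝒢 σ) - 𝒢 σ)
    (hSW : ∀ σ, D σ (↑K : L) = A σ * ↑K) :
    ∀ σ₁ σ₂, D σ₁ (𝒢 σ₂) = πsh (𝒢 σ₁) * 𝒢 σ₂ - 𝒢 σ₂ * πsh (𝒢 σ₁) := by
  intro σ₁ σ₂
  have hKK : (↑K : L) * ↑K⁻¹ = 1 := Units.mul_inv K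
  have hKK' : (↑K⁻¹ : L) * ↑K = 1 := Units.inv_mul K
  -- D of 1 is 0
  have hD1 : D σ₁ (1 : L) = 0 := by
    have h := hDmul σ₁ 1 1
    simp only [one_mul, mul_one] at h
    exact (left_eq_add.mp h)
  -- derivative of K⁻¹
  have hKinv : D σ₁ (↑K⁻¹ : L) = -(↑K⁻¹ * A σ₁) := by
    have h := hDmul σ₁ (↑K⁻¹ : L) (↑K : L)
    rw [hKK', hD1, hSW] at h
    have h2 : (D σ₁ (↑K⁻¹ : L) + ↑K⁻¹ * A σ₁) * ((↑K : L) * ↑K⁻¹) = 0 := by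
      calc (D σ₁ (↑K⁻¹ : L) + ↑K⁻¹ * A σ₁) * ((↑K : L) * ↑K⁻¹)
          = (D σ₁ (↑K⁻¹ : L) * ↑K + ↑K⁻¹ * (A σ₁ * ↑K)) * ↑K⁻¹ := by noncomm_ring
        _ = 0 := by rw [← h, zero_mul]
    rw [hKK, mul_one] at h2
    exact eq_neg_of_add_eq_zero_left h2
  -- conjugation multiplicativity
  have hmul : ∀ a b : L, (↑K * a * ↑K⁻¹) * (↑K * b * ↑K⁻¹) = ↑K * (a * b) * ↑K⁻¹ := by
    intro a b
    calc (↑K * a * ↑K⁻¹) * (↑K * b * ↑K⁻¹)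
        = ↑K * a * ((↑K⁻¹ : L) * ↑K) * b * ↑K⁻¹ := by noncomm_ring
      _ = ↑K * (a * b) * ↑K⁻¹ := by rw [hKK']; noncomm_ring
  have hcommG : 𝒢 σ₁ * 𝒢 σ₂ = 𝒢 σ₂ * 𝒢 σ₁ := by
    rw [hconj, hconj, hmul, hmul, hGcomm]
  have key : D σ₁ (𝒢 σ₂) = A σ₁ * 𝒢 σ₂ - 𝒢 σ₂ * A σ₁ := by
    rw [hconj, hDmul, hDmul, hSW, hGconst, hKinv]
    noncomm_ring
  rw [key, hA]
  calc (πsh (𝒢 σ₁) - 𝒢 σ₁) * 𝒢 σ₂ - 𝒢 σ₂ * (πsh (𝒢 σ₁) - 𝒢 σ₁)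
      = πsh (𝒢 σ₁) * 𝒢 σ₂ - 𝒢 σ₂ * πsh (𝒢 σ₁) - (𝒢 σ₁ * 𝒢 σ₂ - 𝒢 σ₂ * 𝒢 σ₁) := by
        noncomm_ring
    _ = πsh (𝒢 σ₁) * 𝒢 σ₂ - 𝒢 σ₂ * πsh (𝒢 σ₁) := by rw [hcommG]; noncomm_ring
end
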